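/- arXiv:0812.4826 — 3 statements merged into one kernel-verified Lean document; each statement's English description precedes it below -/
import Mathlib

section
/- Let λ, μ > 0 and let N₁, N₂ be independent ℕ-valued random variables with Poisson distributions of means λ and μ, respectively. Then E[ N₁/(N₁+N₂) ] = (λ/(λ+μ))·(1 − exp(−(λ+μ))), where the ratio N₁/(N₁+N₂) is defined to be 0 on the event N₁ + N₂ = 0. -/
open MeasureTheory ProbabilityTheory Real

private def pfeSigmaEquiv : (Σ n : ℕ, Fin (n + 1)) ≃ ℕ × ℕ where
  toFun x := (x.2.1, x.1 - x.2.1)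
  invFun p := ⟨p.1 + p.2, ⟨p.1, by omega⟩⟩
  left_inv := by
    rintro ⟨n, i, hi⟩
    have h : i + (n - i) = n := by omega
    exact Sigma.ext h ((Fin.heq_ext_iff (show i + (n - i) + 1 = n + 1 by omega)).mpr rfl)
  right_inv := by
    rintro ⟨j, k⟩
    simp

private lemma pfe_aux_binom (x y : ℝ) (n : ℕ) :
    ∑ i ∈ Finset.range (n + 2), (i : ℝ) * ((n + 1).choose i : ℝ) * x ^ i * y ^ (n + 1 - i)
      = ((n : ℝ) + 1) * x * (x + y) ^ n := by
  rw [Finset.sum_range_succ', add_pow, Finset.mul_sum]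
  simp only [Nat.cast_zero, zero_mul, add_zero, Nat.succ_sub_succ]
  refine Finset.sum_congr rfl fun i hi => ?_
  have h : ((n + 1).choose (i + 1) : ℝ) * ((i : ℝ) + 1) = ((n : ℝ) + 1) * (n.choose i : ℝ) := by
    exact_mod_cast (Nat.add_one_mul_choose_eq n i).symm
  push_cast
  linear_combination (x ^ (i + 1) * y ^ (n - i)) * h

set_option maxHeartbeats 1000000 in
/-- If `N₁, N₂` are independent Poisson random variables with means `l, u > 0`, then
`E[N₁/(N₁+N₂)] = (l/(l+u))·(1 − exp(−(l+u)))`, where the ratio is `0` on the event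
`N₁ + N₂ = 0` (which agrees with Lean's convention `0/0 = 0`, since `N₁ + N₂ = 0`
forces `N₁ = 0`). -/
theorem poisson_fraction_expectation
    {Ω : Type*} [MeasurableSpace Ω] (P : Measure Ω) [IsProbabilityMeasure P]
    (l u : ℝ) (hl : 0 < l) (hu : 0 < u)
    (N₁ N₂ : Ω → ℕ) (hm₁ : Measurable N₁) (hm₂ : Measurable N₂)
    (hind : IndepFun N₁ N₂ P)
    (hd₁ : Measure.map N₁ P = poissonMeasure l.toNNReal)
    (hd₂ : Measure.map N₂ P = poissonMeasure u.toNNReal) :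
    ∫ ω, (if N₁ ω + N₂ ω = 0 then 0 else
        (N₁ ω : ℝ) / ((N₁ ω : ℝ) + (N₂ ω : ℝ))) ∂P
      = (l / (l + u)) * (1 - Real.exp (-(l + u))) := by
  have hl' : (l.toNNReal : ℝ) = l := Real.coe_toNNReal l hl.le
  have hu' : (u.toNNReal : ℝ) = u := Real.coe_toNNReal u hu.le
  have hs : 0 < l + u := by positivity
  set f : ℕ × ℕ → ℝ := fun x => (x.1 : ℝ) / ((x.1 : ℝ) + (x.2 : ℝ)) with hf_def
  have hf_nonneg : ∀ x, 0 ≤ f x := fun x => by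
    apply div_nonneg <;> positivity
  have hf_le_one : ∀ x, f x ≤ 1 := fun x =>
    div_le_one_of_le₀ (le_add_of_nonneg_right (by positivity)) (by positivity)
  have hint : ∀ ω, (if N₁ ω + N₂ ω = 0 then 0 else
      (N₁ ω : ℝ) / ((N₁ ω : ℝ) + (N₂ ω : ℝ))) = f (N₁ ω, N₂ ω) := by
    intro ω
    by_cases h : N₁ ω + N₂ ω = 0
    · have h1 : N₁ ω = 0 := by omega
      simp [hf_def, h, h1]
    · exact if_neg h
  have hmes : Measurable f := measurable_of_countable f
  set μ : Measure (ℕ × ℕ) := (poissonMeasure l.toNNReal).prod (poissonMeasure u.toNNReal)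
    with hμ_def
  have hmap : P.map (fun ω => (N₁ ω, N₂ ω)) = μ := by
    rw [hμ_def, ← hd₁, ← hd₂]
    exact (indepFun_iff_map_prod_eq_prod_map_map hm₁.aemeasurable hm₂.aemeasurable).mp hind
  have hInt : Integrable f μ := by
    refine (integrable_const (1 : ℝ)).mono' hmes.aestronglyMeasurable
      (ae_of_all _ fun x => ?_)
    rw [Real.norm_of_nonneg (hf_nonneg x)]
    exact hf_le_one x
  have hw : ∀ x : ℕ × ℕ, (μ {x}).toReal
      = poissonPMFReal l.toNNReal x.1 * poissonPMFReal u.toNNReal x.2 := by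
    rintro ⟨j, k⟩
    rw [hμ_def, ← Set.singleton_prod_singleton, Measure.prod_prod, poissonMeasure_singleton,
      poissonMeasure_singleton, ENNReal.toReal_mul]
    rw [ENNReal.toReal_ofReal (by positivity), ENNReal.toReal_ofReal (by positivity)]
    rfl
  set W : ℕ × ℕ → ℝ := fun x =>
    poissonPMFReal l.toNNReal x.1 * poissonPMFReal u.toNNReal x.2 * f x with hW_def
  have hW_nonneg : ∀ x, 0 ≤ W x := fun x =>
    mul_nonneg (mul_nonneg poissonPMFReal_nonneg poissonPMFReal_nonneg) (hf_nonneg x)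
  have hWs : Summable W := by
    refine Summable.of_nonneg_of_le hW_nonneg
      (fun x => mul_le_of_le_one_right
        (mul_nonneg poissonPMFReal_nonneg poissonPMFReal_nonneg) (hf_le_one x))
      (Summable.mul_of_nonneg ((poissonPMFRealSum l.toNNReal).summable)
        ((poissonPMFRealSum u.toNNReal).summable)
        (fun n => poissonPMFReal_nonneg) (fun n => poissonPMFReal_nonneg))
  -- the per-`n` sums
  set G : ℕ → ℝ := fun n => ∑ i ∈ Finset.range (n + 1), W (i, n - i) with hG_def
  have hG0 : G 0 = 0 := by simp [hG_def, hW_def, hf_def]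
  have hfac : ∀ m : ℕ, ((m.factorial : ℕ) : ℝ) ≠ 0 :=
    fun m => Nat.cast_ne_zero.mpr (Nat.factorial_ne_zero m)
  have hGsucc : ∀ n : ℕ, G (n + 1)
      = (Real.exp (-(l + u)) * l / (l + u)) * ((l + u) ^ (n + 1) / (n + 1).factorial) := by
    intro n
    have hterm : ∀ i ∈ Finset.range (n + 2), W (i, n + 1 - i)
        = Real.exp (-(l + u)) / (((n : ℝ) + 1) * ((n + 1).factorial : ℕ))
          * ((i : ℝ) * ((n + 1).choose i : ℝ) * l ^ i * u ^ (n + 1 - i)) := by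
      intro i hi
      have hi' : i ≤ n + 1 := by
        have := Finset.mem_range.mp hi; omega
      have hden : (i : ℝ) + ((n + 1 - i : ℕ) : ℝ) = (n : ℝ) + 1 := by
        rw [← Nat.cast_add, show i + (n + 1 - i) = n + 1 from by omega]
        push_cast; ring
      simp only [hW_def, hf_def, poissonPMFReal, hl', hu']
      rw [hden, Nat.cast_choose ℝ hi', neg_add, Real.exp_add]
      have h1 := hfac i
      have h2 := hfac (n + 1 - i)
      have h3 := hfac (n + 1)
      have h4 : ((n : ℝ) + 1) ≠ 0 := by positivity
      field_simp
    have : G (n + 1) = Real.exp (-(l + u)) / (((n : ℝ) + 1) * ((n + 1).factorial : ℕ))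
        * (((n : ℝ) + 1) * l * (l + u) ^ n) := by
      rw [hG_def]
      simp only []
      rw [Finset.sum_congr rfl hterm, ← Finset.mul_sum, pfe_aux_binom]
    rw [this]
    have h3 := hfac (n + 1)
    have h4 : ((n : ℝ) + 1) ≠ 0 := by positivity
    field_simp
    ring
  have hexp : HasSum (fun n : ℕ => (l + u) ^ n / n.factorial) (Real.exp (l + u)) := by
    rw [Real.exp_eq_exp_ℝ]
    exact NormedSpace.expSeries_div_hasSum_exp (l + u)
  have h5 : HasSum (fun n : ℕ => (l + u) ^ (n + 1) / (n + 1).factorial) (Real.exp (l + u) - 1) := by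
    refine (hasSum_nat_add_iff (f := fun n : ℕ => (l + u) ^ n / n.factorial) 1).mpr ?_
    simpa using hexp
  have h6 : HasSum G ((Real.exp (-(l + u)) * l / (l + u)) * (Real.exp (l + u) - 1)) := by
    have h7 := h5.mul_left (Real.exp (-(l + u)) * l / (l + u))
    have heq : (fun n : ℕ => (Real.exp (-(l + u)) * l / (l + u))
        * ((l + u) ^ (n + 1) / (n + 1).factorial)) = fun n => G (n + 1) :=
      funext fun n => (hGsucc n).symm
    rw [heq] at h7
    have h8 := (hasSum_nat_add_iff (f := G) 1).mp h7
    simpa [hG0] using h8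
  have hval : (Real.exp (-(l + u)) * l / (l + u)) * (Real.exp (l + u) - 1)
      = (l / (l + u)) * (1 - Real.exp (-(l + u))) := by
    have h : Real.exp (-(l + u)) * Real.exp (l + u) = 1 := by
      rw [← Real.exp_add, neg_add_cancel, Real.exp_zero]
    linear_combination (l / (l + u)) * h
  -- summability transferred over the equivalence
  have hWs' : Summable fun σ : Σ n : ℕ, Fin (n + 1) => W (pfeSigmaEquiv σ) :=
    pfeSigmaEquiv.summable_iff.mpr hWs
  calc ∫ ω, (if N₁ ω + N₂ ω = 0 then 0 else
        (N₁ ω : ℝ) / ((N₁ ω : ℝ) + (N₂ ω : ℝ))) ∂P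
      = ∫ ω, f (N₁ ω, N₂ ω) ∂P := integral_congr_ae (ae_of_all _ hint)
    _ = ∫ x, f x ∂μ := by
        rw [← hmap]
        exact (integral_map (hm₁.prodMk hm₂).aemeasurable
          hmes.aestronglyMeasurable).symm
    _ = ∑' x : ℕ × ℕ, (μ {x}).toReal • f x := integral_countable' hInt
    _ = ∑' x : ℕ × ℕ, W x := tsum_congr fun x => by rw [smul_eq_mul, hw, hW_def]
    _ = ∑' σ : Σ n : ℕ, Fin (n + 1), W (pfeSigmaEquiv σ) := (pfeSigmaEquiv.tsum_eq W).symm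
    _ = ∑' n : ℕ, ∑' i : Fin (n + 1), W (pfeSigmaEquiv ⟨n, i⟩) :=
        hWs'.tsum_sigma' (fun n => (hasSum_fintype _).summable)
    _ = ∑' n : ℕ, G n := by
        refine tsum_congr fun n => ?_
        rw [tsum_fintype]
        exact Fin.sum_univ_eq_sum_range (fun i => W (i, n - i)) (n + 1)
    _ = (Real.exp (-(l + u)) * l / (l + u)) * (Real.exp (l + u) - 1) := h6.tsum_eq
    _ = (l / (l + u)) * (1 - Real.exp (-(l + u))) := hval
end

section
/- Fix a real β ≥ 2 and a sequence a : ℕ → ℝ with a(n) > 0 for all n. For each n let N_p(n), N_s(n) be independent ℕ-valued random variables with Poisson distributions of means n·a(n) and n^β·a(n), respectively. Then E[ N_p(n)/(N_p(n)+N_s(n)) ] → 0 as n → ∞, where the ratio is defined to be 0 on the event N_p(n)+N_s(n) = 0. Hence a uniformly randomly selected node in a cell is a secondary node with probability tending to 1. -/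
open MeasureTheory ProbabilityTheory Real Filter Topology

open scoped ENNReal NNReal

set_option maxHeartbeats 1000000

private lemma poissonPMF_apply (r : ℝ≥0) (k : ℕ) :
    poissonPMF r k = ENNReal.ofReal (poissonPMFReal r k) := rfl

private lemma poisson_key (r : ℝ≥0) (k : ℕ) :
    ((k + 1 : ℕ) : ℝ≥0∞) * poissonPMF r (k + 1) = (r : ℝ≥0∞) * poissonPMF r k := by
  rw [poissonPMF_apply, poissonPMF_apply, ← ENNReal.ofReal_natCast,
    ← ENNReal.ofReal_coe_nnreal, ← ENNReal.ofReal_mul (by positivity),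
    ← ENNReal.ofReal_mul (by positivity)]
  congr 1
  unfold poissonPMFReal
  have hk : ((k + 1 : ℕ) : ℝ) ≠ 0 := by positivity
  have hf : ((Nat.factorial k : ℝ)) ≠ 0 := by positivity
  rw [Nat.factorial_succ]
  push_cast
  field_simp
  ring

private lemma poisson_singleton (r : ℝ≥0) (k : ℕ) :
    poissonMeasure r {k} = poissonPMF r k := by
  exact (poissonMeasure_singleton r k).trans rfl

private lemma poisson_mean (r : ℝ≥0) :
    ∫⁻ k, (k : ℝ≥0∞) ∂(poissonMeasure r) = (r : ℝ≥0∞) := by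
  rw [lintegral_countable' (fun k : ℕ => (k : ℝ≥0∞))]
  simp_rw [poisson_singleton]
  rw [tsum_eq_zero_add' ENNReal.summable]
  simp only [Nat.cast_zero, zero_mul, zero_add]
  calc ∑' k : ℕ, ((k + 1 : ℕ) : ℝ≥0∞) * poissonPMF r (k + 1)
      = ∑' k : ℕ, (r : ℝ≥0∞) * poissonPMF r k := tsum_congr fun k => poisson_key r k
    _ = (r : ℝ≥0∞) * ∑' k : ℕ, poissonPMF r k := ENNReal.tsum_mul_left
    _ = (r : ℝ≥0∞) := by rw [(poissonPMF r).tsum_coe, mul_one]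

private lemma poisson_inv_succ (r : ℝ≥0) (hr : 0 < r) :
    ∫⁻ k, ((k : ℝ≥0∞) + 1)⁻¹ ∂(poissonMeasure r) ≤ (r : ℝ≥0∞)⁻¹ := by
  have hr0 : (r : ℝ≥0∞) ≠ 0 := by exact_mod_cast hr.ne'
  rw [lintegral_countable' (fun k : ℕ => ((k : ℝ≥0∞) + 1)⁻¹)]
  simp_rw [poisson_singleton]
  have hk : ∀ k : ℕ, ((k : ℝ≥0∞) + 1)⁻¹ * poissonPMF r k
      ≤ (r : ℝ≥0∞)⁻¹ * poissonPMF r (k + 1) := by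
    intro k
    have hk1 : ((k : ℝ≥0∞) + 1) ≠ 0 := by simp
    have hk2 : ((k : ℝ≥0∞) + 1) ≠ ⊤ := by simp
    have hcast : ((k + 1 : ℕ) : ℝ≥0∞) = (k : ℝ≥0∞) + 1 := by push_cast; ring
    have hA : (r : ℝ≥0∞) * (((k : ℝ≥0∞) + 1)⁻¹ * poissonPMF r k) = poissonPMF r (k + 1) := by
      calc (r : ℝ≥0∞) * (((k : ℝ≥0∞) + 1)⁻¹ * poissonPMF r k)
          = ((k : ℝ≥0∞) + 1)⁻¹ * ((r : ℝ≥0∞) * poissonPMF r k) := mul_left_comm _ _ _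
        _ = ((k : ℝ≥0∞) + 1)⁻¹ * (((k + 1 : ℕ) : ℝ≥0∞) * poissonPMF r (k + 1)) := by
            rw [poisson_key]
        _ = (((k : ℝ≥0∞) + 1)⁻¹ * ((k : ℝ≥0∞) + 1)) * poissonPMF r (k + 1) := by
            rw [hcast, mul_assoc]
        _ = poissonPMF r (k + 1) := by rw [ENNReal.inv_mul_cancel hk1 hk2, one_mul]
    have hB : ((k : ℝ≥0∞) + 1)⁻¹ * poissonPMF r k
        = (r : ℝ≥0∞)⁻¹ * poissonPMF r (k + 1) := by
      calc ((k : ℝ≥0∞) + 1)⁻¹ * poissonPMF r k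
          = ((r : ℝ≥0∞)⁻¹ * (r : ℝ≥0∞)) * (((k : ℝ≥0∞) + 1)⁻¹ * poissonPMF r k) := by
            rw [ENNReal.inv_mul_cancel hr0 ENNReal.coe_ne_top, one_mul]
        _ = (r : ℝ≥0∞)⁻¹ * ((r : ℝ≥0∞) * (((k : ℝ≥0∞) + 1)⁻¹ * poissonPMF r k)) :=
            mul_assoc _ _ _
        _ = (r : ℝ≥0∞)⁻¹ * poissonPMF r (k + 1) := by rw [hA]
    exact le_of_eq hB
  calc ∑' k : ℕ, ((k : ℝ≥0∞) + 1)⁻¹ * poissonPMF r k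
      ≤ ∑' k : ℕ, (r : ℝ≥0∞)⁻¹ * poissonPMF r (k + 1) := ENNReal.tsum_le_tsum hk
    _ = (r : ℝ≥0∞)⁻¹ * ∑' k : ℕ, poissonPMF r (k + 1) := ENNReal.tsum_mul_left
    _ ≤ (r : ℝ≥0∞)⁻¹ * 1 := by
        gcongr
        have h1 := (poissonPMF r).tsum_coe
        rw [tsum_eq_zero_add' ENNReal.summable] at h1
        calc ∑' k : ℕ, poissonPMF r (k + 1)
            ≤ poissonPMF r 0 + ∑' k : ℕ, poissonPMF r (k + 1) := le_add_self
          _ = 1 := h1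
    _ = (r : ℝ≥0∞)⁻¹ := mul_one _

private lemma ratio_le_bound (p s : ℕ) :
    ENNReal.ofReal (if p + s = 0 then 0 else (p : ℝ) / ((p : ℝ) + (s : ℝ)))
      ≤ (p : ℝ≥0∞) * ((s : ℝ≥0∞) + 1)⁻¹ := by
  rcases Nat.eq_zero_or_pos p with hp | hp
  · subst hp
    simp only [Nat.cast_zero, zero_div, ite_self, ENNReal.ofReal_zero]
    exact zero_le
  · have hps : p + s ≠ 0 := by omega
    rw [if_neg hps]
    have hp1 : (1 : ℝ) ≤ p := by exact_mod_cast hp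
    have h2 : (p : ℝ) / ((p : ℝ) + s) ≤ (p : ℝ) / ((s : ℝ) + 1) := by
      apply div_le_div_of_nonneg_left (by positivity) (by positivity)
      linarith
    refine le_trans (ENNReal.ofReal_le_ofReal h2) ?_
    rw [ENNReal.ofReal_div_of_pos (by positivity), div_eq_mul_inv]
    have e1 : ENNReal.ofReal (p : ℝ) = (p : ℝ≥0∞) := ENNReal.ofReal_natCast p
    have e2 : ENNReal.ofReal ((s : ℝ) + 1) = (s : ℝ≥0∞) + 1 := by
      rw [ENNReal.ofReal_add (by positivity) zero_le_one, ENNReal.ofReal_natCast,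
        ENNReal.ofReal_one]
    rw [e1, e2]

/-- Lemma 2 of the paper: fix `β ≥ 2` and positive cell areas `a n`. If, for each `n`,
`N_p n` and `N_s n` are independent Poisson counts with means `n·a n` and `n^β·a n`
(the numbers of primary and secondary nodes in a cell), then the probability
`E[N_p/(N_p+N_s)]` that a uniformly selected node in the cell is primary tends to `0`
as `n → ∞`; i.e. a randomly selected designated relay node is a secondary node with
high probability. -/
theorem relay_is_secondary_whp
    (β : ℝ) (hβ : 2 ≤ β) (a : ℕ → ℝ) (ha : ∀ n, 0 < a n)
    (Ω : ℕ → Type) (mΩ : ∀ n, MeasurableSpace (Ω n))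
    (P : ∀ n, Measure (Ω n)) (hP : ∀ n, IsProbabilityMeasure (P n))
    (Np Ns : ∀ n, Ω n → ℕ)
    (hmp : ∀ n, Measurable (Np n)) (hms : ∀ n, Measurable (Ns n))
    (hind : ∀ n, IndepFun (Np n) (Ns n) (P n))
    (hdp : ∀ n : ℕ, Measure.map (Np n) (P n) = poissonMeasure ((n * a n).toNNReal))
    (hds : ∀ n : ℕ, Measure.map (Ns n) (P n) = poissonMeasure (((n : ℝ) ^ β * a n).toNNReal)) :
    Tendsto
      (fun n => ∫ ω, (if Np n ω + Ns n ω = 0 then 0 else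
          (Np n ω : ℝ) / ((Np n ω : ℝ) + (Ns n ω : ℝ))) ∂(P n))
      atTop (𝓝 0) := by
  set I : ℕ → ℝ := fun n => ∫ ω, (if Np n ω + Ns n ω = 0 then 0 else
      (Np n ω : ℝ) / ((Np n ω : ℝ) + (Ns n ω : ℝ))) ∂(P n) with hI
  have hnonneg : ∀ n ω, 0 ≤ (if Np n ω + Ns n ω = 0 then 0 else
      (Np n ω : ℝ) / ((Np n ω : ℝ) + (Ns n ω : ℝ))) := by
    intro n ω
    split_ifs with h
    · exact le_refl 0
    · positivity
  have key0 : ∀ n, 0 ≤ I n := fun n => integral_nonneg (hnonneg n)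
  have key1 : ∀ n : ℕ, 1 ≤ n → I n ≤ ((n : ℝ))⁻¹ := by
    intro n hn
    have hn1 : (1 : ℝ) ≤ (n : ℝ) := by exact_mod_cast hn
    have hn0 : (0 : ℝ) < (n : ℝ) := by linarith
    have han := ha n
    have hμ1pos : (0 : ℝ) < n * a n := mul_pos hn0 han
    have hμ2pos : (0 : ℝ) < (n : ℝ) ^ β * a n :=
      mul_pos (Real.rpow_pos_of_pos hn0 β) han
    set μ1 : ℝ≥0 := (n * a n).toNNReal with hμ1
    set μ2 : ℝ≥0 := ((n : ℝ) ^ β * a n).toNNReal with hμ2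
    have hμ2ne : (μ2 : ℝ≥0∞) ≠ 0 := by
      exact_mod_cast (Real.toNNReal_pos.mpr hμ2pos).ne'
    -- measurability
    have hfmeas : Measurable (fun ω => (if Np n ω + Ns n ω = 0 then 0 else
        (Np n ω : ℝ) / ((Np n ω : ℝ) + (Ns n ω : ℝ)))) := by
      have : (fun ω => (if Np n ω + Ns n ω = 0 then 0 else
          (Np n ω : ℝ) / ((Np n ω : ℝ) + (Ns n ω : ℝ)))) =
          (fun q : ℕ × ℕ => (if q.1 + q.2 = 0 then 0 else
          (q.1 : ℝ) / ((q.1 : ℝ) + (q.2 : ℝ)))) ∘ (fun ω => (Np n ω, Ns n ω)) := rfl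
      rw [this]
      exact (measurable_of_countable _).comp ((hmp n).prodMk (hms n))
    have hg1 : Measurable (fun ω => (Np n ω : ℝ≥0∞)) :=
      (measurable_of_countable (fun k : ℕ => (k : ℝ≥0∞))).comp (hmp n)
    have hg2 : Measurable (fun ω => ((Ns n ω : ℝ≥0∞) + 1)⁻¹) :=
      (measurable_of_countable (fun k : ℕ => ((k : ℝ≥0∞) + 1)⁻¹)).comp (hms n)
    have hind' : IndepFun (fun ω => (Np n ω : ℝ≥0∞))
        (fun ω => ((Ns n ω : ℝ≥0∞) + 1)⁻¹) (P n) :=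
      (hind n).comp (measurable_of_countable fun k : ℕ => (k : ℝ≥0∞))
        (measurable_of_countable fun k : ℕ => ((k : ℝ≥0∞) + 1)⁻¹)
    -- compute moments through the maps
    have hm1 : ∫⁻ ω, (Np n ω : ℝ≥0∞) ∂(P n) = (μ1 : ℝ≥0∞) := by
      rw [← lintegral_map (measurable_of_countable (fun k : ℕ => (k : ℝ≥0∞))) (hmp n),
        hdp n, poisson_mean]
    have hm2 : ∫⁻ ω, ((Ns n ω : ℝ≥0∞) + 1)⁻¹ ∂(P n) ≤ (μ2 : ℝ≥0∞)⁻¹ := by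
      rw [← lintegral_map (measurable_of_countable (fun k : ℕ => ((k : ℝ≥0∞) + 1)⁻¹)) (hms n),
        hds n]
      exact poisson_inv_succ μ2 (Real.toNNReal_pos.mpr hμ2pos)
    have hb : ∫⁻ ω, ENNReal.ofReal (if Np n ω + Ns n ω = 0 then 0 else
        (Np n ω : ℝ) / ((Np n ω : ℝ) + (Ns n ω : ℝ))) ∂(P n)
        ≤ (μ1 : ℝ≥0∞) * (μ2 : ℝ≥0∞)⁻¹ := by
      have step1 : ∫⁻ ω, ENNReal.ofReal (if Np n ω + Ns n ω = 0 then 0 else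
          (Np n ω : ℝ) / ((Np n ω : ℝ) + (Ns n ω : ℝ))) ∂(P n)
          ≤ ∫⁻ ω, (Np n ω : ℝ≥0∞) * ((Ns n ω : ℝ≥0∞) + 1)⁻¹ ∂(P n) :=
        lintegral_mono fun ω => ratio_le_bound (Np n ω) (Ns n ω)
      have step2 := lintegral_mul_eq_lintegral_mul_lintegral_of_indepFun hg1 hg2 hind'
      simp only [Pi.mul_apply] at step2
      calc _ ≤ ∫⁻ ω, (Np n ω : ℝ≥0∞) * ((Ns n ω : ℝ≥0∞) + 1)⁻¹ ∂(P n) := step1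
        _ = (∫⁻ ω, (Np n ω : ℝ≥0∞) ∂(P n)) * ∫⁻ ω, ((Ns n ω : ℝ≥0∞) + 1)⁻¹ ∂(P n) := step2
        _ ≤ (μ1 : ℝ≥0∞) * (μ2 : ℝ≥0∞)⁻¹ := by
            rw [hm1]; exact mul_le_mul_right hm2 _
    have hBne : (μ1 : ℝ≥0∞) * (μ2 : ℝ≥0∞)⁻¹ ≠ ⊤ :=
      ENNReal.mul_ne_top ENNReal.coe_ne_top (ENNReal.inv_ne_top.mpr hμ2ne)
    have hIeq : I n = (∫⁻ ω, ENNReal.ofReal (if Np n ω + Ns n ω = 0 then 0 else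
        (Np n ω : ℝ) / ((Np n ω : ℝ) + (Ns n ω : ℝ))) ∂(P n)).toReal := by
      rw [hI]
      exact integral_eq_lintegral_of_nonneg_ae (Eventually.of_forall (hnonneg n))
        hfmeas.aestronglyMeasurable
    rw [hIeq]
    calc (∫⁻ ω, ENNReal.ofReal (if Np n ω + Ns n ω = 0 then 0 else
          (Np n ω : ℝ) / ((Np n ω : ℝ) + (Ns n ω : ℝ))) ∂(P n)).toReal
        ≤ ((μ1 : ℝ≥0∞) * (μ2 : ℝ≥0∞)⁻¹).toReal := ENNReal.toReal_mono hBne hb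
      _ = (μ1 : ℝ) * (μ2 : ℝ)⁻¹ := by
          rw [ENNReal.toReal_mul, ENNReal.toReal_inv, ENNReal.coe_toReal, ENNReal.coe_toReal]
      _ = (n * a n) * ((n : ℝ) ^ β * a n)⁻¹ := by
          rw [hμ1, hμ2, Real.coe_toNNReal _ hμ1pos.le, Real.coe_toNNReal _ hμ2pos.le]
      _ ≤ ((n : ℝ))⁻¹ := by
          have h2β : (n : ℝ) ^ (2 : ℝ) ≤ (n : ℝ) ^ β :=
            Real.rpow_le_rpow_of_exponent_le hn1 hβ
          have h2 : (n : ℝ) * (n : ℝ) ≤ (n : ℝ) ^ β := by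
            rw [show (2 : ℝ) = ((2 : ℕ) : ℝ) by norm_num, Real.rpow_natCast] at h2β
            nlinarith [h2β]
          rw [← div_eq_mul_inv, inv_eq_one_div, div_le_div_iff₀ hμ2pos hn0]
          nlinarith [mul_le_mul_of_nonneg_right h2 han.le]
  refine squeeze_zero' (Eventually.of_forall key0)
    ((eventually_ge_atTop 1).mono key1) ?_
  exact tendsto_inv_atTop_nhds_zero_nat
end

section
/- Let U₁, U₂, V₁, V₂ be independent random variables, each uniformly distributed on the interval [0,1], and let s be a real number with 0 < s < 1. Then (2/3)·(1/s) ≤ E[ ⌈|U₁ − V₁|/s⌉ + ⌈|U₂ − V₂|/s⌉ ] ≤ (2/3)·(1/s) + 2, where ⌈·⌉ denotes the ceiling function (viewed as a real number). -/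
open MeasureTheory ProbabilityTheory Real

noncomputable def μ01 : Measure ℝ := volume.restrict (Set.Icc (0:ℝ) 1)

instance : IsProbabilityMeasure μ01 := by
  constructor
  simp [μ01, Real.volume_Icc]

lemma inner_abs (a : ℝ) (ha : a ∈ Set.Icc (0:ℝ) 1) :
    ∫ y in Set.Icc (0:ℝ) 1, |a - y| = a^2 - a + 1/2 := by
  obtain ⟨ha0, ha1⟩ := ha
  rw [MeasureTheory.integral_Icc_eq_integral_Ioc,
    ← intervalIntegral.integral_of_le zero_le_one]
  have hid : ∀ u v : ℝ, IntervalIntegrable (fun y : ℝ => y) volume u v :=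
    fun u v => continuous_id.intervalIntegrable u v
  have hconst : ∀ c u v : ℝ, IntervalIntegrable (fun _ : ℝ => c) volume u v :=
    fun c u v => continuous_const.intervalIntegrable u v
  have hi : ∀ u v : ℝ, IntervalIntegrable (fun y => |a - y|) volume u v :=
    fun u v => ((continuous_const.sub continuous_id).abs).intervalIntegrable u v
  have hadd := intervalIntegral.integral_add_adjacent_intervals (a := (0:ℝ)) (b := a)
    (c := 1) (f := fun y => |a - y|) (hi 0 a) (hi a 1)
  have h1 : ∫ y in (0:ℝ)..a, |a - y| = ∫ y in (0:ℝ)..a, (a - y) := by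
    apply intervalIntegral.integral_congr
    intro y hy
    rw [Set.uIcc_of_le ha0] at hy
    show |a - y| = a - y
    exact abs_of_nonneg (by linarith [hy.2])
  have h2 : ∫ y in a..(1:ℝ), |a - y| = ∫ y in a..(1:ℝ), (y - a) := by
    apply intervalIntegral.integral_congr
    intro y hy
    rw [Set.uIcc_of_le ha1] at hy
    show |a - y| = y - a
    rw [abs_of_nonpos (by linarith [hy.1]), neg_sub]
  rw [← hadd, h1, h2,
    intervalIntegral.integral_sub (hconst a 0 a) (hid 0 a),
    intervalIntegral.integral_sub (hid a 1) (hconst a a 1)]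
  simp [integral_id]
  ring

lemma prod_abs : ∫ p, |p.1 - p.2| ∂(μ01.prod μ01) = 1/3 := by
  have hprod : μ01.prod μ01 = (volume.prod volume).restrict
      (Set.Icc (0:ℝ) 1 ×ˢ Set.Icc (0:ℝ) 1) := Measure.prod_restrict _ _
  have hmem : ∀ᵐ p ∂(μ01.prod μ01), p ∈ Set.Icc (0:ℝ) 1 ×ˢ Set.Icc (0:ℝ) 1 := by
    rw [hprod]
    exact ae_restrict_mem (measurableSet_Icc.prod measurableSet_Icc)
  have hint : Integrable (fun p : ℝ × ℝ => |p.1 - p.2|) (μ01.prod μ01) := by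
    apply Integrable.mono' (integrable_const (1:ℝ))
      ((continuous_fst.sub continuous_snd).abs).aestronglyMeasurable
    filter_upwards [hmem] with p hp
    obtain ⟨⟨h1, h2⟩, h3, h4⟩ := hp
    rw [Real.norm_eq_abs, abs_abs, Pi.sub_apply, abs_sub_le_iff]
    constructor <;> linarith
  rw [MeasureTheory.integral_prod _ hint]
  show ∫ x in Set.Icc (0:ℝ) 1, (∫ y in Set.Icc (0:ℝ) 1, |x - y|) = 1/3
  rw [MeasureTheory.setIntegral_congr_fun measurableSet_Icc
    (fun x hx => inner_abs x hx)]
  rw [MeasureTheory.integral_Icc_eq_integral_Ioc,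
    ← intervalIntegral.integral_of_le zero_le_one,
    intervalIntegral.integral_add
      ((((continuous_pow 2).intervalIntegrable 0 1 : IntervalIntegrable (fun y : ℝ => y^2) volume 0 1)).sub
        intervalIntegral.intervalIntegrable_id)
      (continuous_const.intervalIntegrable 0 1 : IntervalIntegrable (fun _ : ℝ => (1:ℝ)/2) volume 0 1),
    intervalIntegral.integral_sub
      ((continuous_pow 2).intervalIntegrable 0 1 : IntervalIntegrable (fun y : ℝ => y^2) volume 0 1)
      intervalIntegral.intervalIntegrable_id]
  simp [integral_pow, integral_id]
  norm_num

lemma exp_abs_third {Ω : Type*} [MeasurableSpace Ω] (P : Measure Ω) [IsProbabilityMeasure P]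
    (U V : Ω → ℝ) (hU : Measurable U) (hV : Measurable V)
    (hUV : IndepFun U V P)
    (hU' : P.map U = μ01) (hV' : P.map V = μ01) :
    ∫ ω, |U ω - V ω| ∂P = 1/3 := by
  have hmap : P.map (fun ω => (U ω, V ω)) = μ01.prod μ01 := by
    rw [(indepFun_iff_map_prod_eq_prod_map_map hU.aemeasurable hV.aemeasurable).mp hUV,
      hU', hV']
  have h := MeasureTheory.integral_map (μ := P) (φ := fun ω => (U ω, V ω))
    (hU.prodMk hV).aemeasurable
    (f := fun p : ℝ × ℝ => |p.1 - p.2|)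
    ((continuous_fst.sub continuous_snd).abs.aestronglyMeasurable)
  rw [hmap, prod_abs] at h
  exact h.symm

lemma hop_bounds {Ω : Type*} [MeasurableSpace Ω] (P : Measure Ω) [IsProbabilityMeasure P]
    (U V : Ω → ℝ) (hU : Measurable U) (hV : Measurable V)
    (hUV : IndepFun U V P)
    (hU' : P.map U = μ01) (hV' : P.map V = μ01)
    (s : ℝ) (hs0 : 0 < s) :
    Integrable (fun ω => (⌈|U ω - V ω| / s⌉ : ℝ)) P ∧
    1/3 * (1/s) ≤ (∫ ω, (⌈|U ω - V ω| / s⌉ : ℝ) ∂P) ∧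
    (∫ ω, (⌈|U ω - V ω| / s⌉ : ℝ) ∂P) ≤ 1/3 * (1/s) + 1 := by
  set X : Ω → ℝ := fun ω => |U ω - V ω| / s with hX
  have haeU : ∀ᵐ ω ∂P, U ω ∈ Set.Icc (0:ℝ) 1 := by
    refine ae_of_ae_map hU.aemeasurable ?_
    rw [hU']
    exact ae_restrict_mem measurableSet_Icc
  have haeV : ∀ᵐ ω ∂P, V ω ∈ Set.Icc (0:ℝ) 1 := by
    refine ae_of_ae_map hV.aemeasurable ?_
    rw [hV']
    exact ae_restrict_mem measurableSet_Icc
  have hbd : ∀ᵐ ω ∂P, X ω ≤ 1/s := by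
    filter_upwards [haeU, haeV] with ω h1 h2
    have : |U ω - V ω| ≤ 1 := by
      rw [abs_sub_le_iff]; constructor <;> [linarith [h1.2, h2.1]; linarith [h1.1, h2.2]]
    simp only [hX]
    gcongr
  have hXnn : ∀ ω, 0 ≤ X ω := fun ω => div_nonneg (abs_nonneg _) hs0.le
  have hXmeas : Measurable X := (hU.sub hV).abs.div_const s
  have hXint : Integrable X P := by
    apply Integrable.mono' (integrable_const (1/s)) hXmeas.aestronglyMeasurable
    filter_upwards [hbd] with ω h
    rw [Real.norm_eq_abs, abs_of_nonneg (hXnn ω)]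
    exact h
  have hXval : ∫ ω, X ω ∂P = 1/3 * (1/s) := by
    simp only [hX, div_eq_mul_inv]
    rw [integral_mul_const, exp_abs_third P U V hU hV hUV hU' hV']
    ring
  have hCmeas : Measurable (fun ω => (⌈X ω⌉ : ℝ)) :=
    measurable_from_top.comp hXmeas.ceil
  have hCint : Integrable (fun ω => (⌈X ω⌉ : ℝ)) P := by
    apply Integrable.mono' (integrable_const (1/s + 1)) hCmeas.aestronglyMeasurable
    filter_upwards [hbd] with ω h
    rw [Real.norm_eq_abs, abs_of_nonneg (by exact_mod_cast Int.ceil_nonneg (hXnn ω))]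
    calc (⌈X ω⌉ : ℝ) ≤ X ω + 1 := (Int.ceil_lt_add_one _).le
      _ ≤ 1/s + 1 := by linarith
  refine ⟨hCint, ?_, ?_⟩
  · rw [← hXval]
    exact integral_mono_ae hXint hCint (Filter.Eventually.of_forall fun ω => Int.le_ceil _)
  · have : (∫ ω, (⌈X ω⌉ : ℝ) ∂P) ≤ ∫ ω, (X ω + 1) ∂P := by
      refine integral_mono_ae hCint (hXint.add (integrable_const 1)) ?_
      exact Filter.Eventually.of_forall fun ω => (Int.ceil_lt_add_one _).le
    rwa [integral_add hXint (integrable_const 1), integral_const, probReal_univ,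
      one_smul, hXval] at this

/-- Expected hop count for horizontal-vertical routing: if the source `(U₁, U₂)` and
destination `(V₁, V₂)` coordinates are independent and uniform on `[0,1]`, and the
grid cells have side length `0 < s < 1`, then the expected number of hops
`⌈|U₁−V₁|/s⌉ + ⌈|U₂−V₂|/s⌉` lies between `(2/3)·(1/s)` and `(2/3)·(1/s) + 2`. -/
theorem expected_hop_count
    {Ω : Type*} [MeasurableSpace Ω] (P : Measure Ω) [IsProbabilityMeasure P]
    (U₁ U₂ V₁ V₂ : Ω → ℝ)
    (hm : ∀ i, Measurable (![U₁, U₂, V₁, V₂] i))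
    (hind : iIndepFun ![U₁, U₂, V₁, V₂] P)
    (hdist : ∀ i, Measure.map (![U₁, U₂, V₁, V₂] i) P
      = MeasureTheory.volume.restrict (Set.Icc (0 : ℝ) 1))
    (s : ℝ) (hs0 : 0 < s) (hs1 : s < 1) :
    (2 / 3) * (1 / s)
        ≤ ∫ ω, ((⌈|U₁ ω - V₁ ω| / s⌉ : ℝ) + (⌈|U₂ ω - V₂ ω| / s⌉ : ℝ)) ∂P ∧
      ∫ ω, ((⌈|U₁ ω - V₁ ω| / s⌉ : ℝ) + (⌈|U₂ ω - V₂ ω| / s⌉ : ℝ)) ∂P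
        ≤ (2 / 3) * (1 / s) + 2 := by
  have hmU₁ : Measurable U₁ := hm 0
  have hmU₂ : Measurable U₂ := hm 1
  have hmV₁ : Measurable V₁ := hm 2
  have hmV₂ : Measurable V₂ := hm 3
  have hdU₁ : P.map U₁ = μ01 := hdist 0
  have hdU₂ : P.map U₂ = μ01 := hdist 1
  have hdV₁ : P.map V₁ = μ01 := hdist 2
  have hdV₂ : P.map V₂ = μ01 := hdist 3
  have hi₁ : IndepFun U₁ V₁ P := hind.indepFun (i := 0) (j := 2) (by decide)
  have hi₂ : IndepFun U₂ V₂ P := hind.indepFun (i := 1) (j := 3) (by decide)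
  obtain ⟨hI1, hL1, hR1⟩ := hop_bounds P U₁ V₁ hmU₁ hmV₁ hi₁ hdU₁ hdV₁ s hs0
  obtain ⟨hI2, hL2, hR2⟩ := hop_bounds P U₂ V₂ hmU₂ hmV₂ hi₂ hdU₂ hdV₂ s hs0
  rw [integral_add hI1 hI2]
  constructor <;> linarith
end
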